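/- Let k be a positive integer and n = 2^k − 1. Then there exists an orientation of the n-cube in which every vertex has in-degree (n−1)/2 or n; moreover one can construct it so that the vertices of in-degree n are exactly the elements of a perfect 1-error-correcting code in the n-cube. -/

import Mathlib

/-- Flip coordinate `i` of a binary `n`-tuple. -/
def flipBit {n : ℕ} (v : Fin n → ZMod 2) (i : Fin n) : Fin n → ZMod 2 :=
  Function.update v i (v i + 1)

/-- An orientation of the `n`-cube: to each edge (a pair of vertices differing in
exactly one coordinate) we assign a head, one of its two endpoints.  The edge at
vertex `v` in direction `i` joins `v` and `flipBit v i`; `head v i` is the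
assigned head of that edge, which must be one of the endpoints and must not
depend on from which endpoint the edge is viewed. -/
structure CubeOrientation (n : ℕ) where
  head : (Fin n → ZMod 2) → Fin n → (Fin n → ZMod 2)
  head_mem : ∀ v i, head v i = v ∨ head v i = flipBit v i
  compatible : ∀ v i, head (flipBit v i) i = head v i

/-- The in-degree of a vertex `v`: the number of edges incident to `v`
whose head is `v`. -/
def CubeOrientation.inDeg {n : ℕ} (o : CubeOrientation n) (v : Fin n → ZMod 2) : ℕ :=
  (Finset.univ.filter fun i : Fin n => o.head v i = v).card

/-- A perfect 1-error-correcting code in the `n`-cube: every vertex is within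
Hamming distance 1 of exactly one codeword. -/
def IsPerfectCode {n : ℕ} (H : Set (Fin n → ZMod 2)) : Prop :=
  ∀ v : Fin n → ZMod 2, ∃! h, h ∈ H ∧ hammingDist v h ≤ 1

namespace HammingSink

variable {k n : ℕ}

theorem zmod2_add_self (a : Fin k → ZMod 2) : a + a = 0 := by
  funext x
  have : ∀ z : ZMod 2, z + z = 0 := by decide
  exact this _

theorem add_add_cancel (a b : Fin k → ZMod 2) : a + (a + b) = b := by
  rw [← add_assoc, zmod2_add_self, zero_add]

theorem eq_of_add_eq_zero' {a b : Fin k → ZMod 2} (h : a + b = 0) : b = a := by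
  have := congrArg (HAdd.hAdd a) h
  rwa [add_add_cancel, add_zero] at this

theorem flipBit_flipBit (v : Fin n → ZMod 2) (i : Fin n) : flipBit (flipBit v i) i = v := by
  funext j
  rcases eq_or_ne j i with rfl | hj
  · have : ∀ z : ZMod 2, z + 1 + 1 = z := by decide
    simp [flipBit, Function.update_self, this]
  · simp [flipBit, Function.update_of_ne hj]

theorem flipBit_ne (v : Fin n → ZMod 2) (i : Fin n) : flipBit v i ≠ v := by
  intro h
  have h2 := congrFun h i
  simp only [flipBit, Function.update_self] at h2
  exact (by decide : ∀ z : ZMod 2, ¬ z + 1 = z) _ h2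

theorem hammingDist_flipBit (v : Fin n → ZMod 2) (i : Fin n) :
    hammingDist v (flipBit v i) = 1 := by
  have h : (Finset.univ.filter fun j => v j ≠ flipBit v i j) = {i} := by
    ext j
    simp only [Finset.mem_filter, Finset.mem_univ, true_and, Finset.mem_singleton]
    rcases eq_or_ne j i with rfl | hj
    · simp only [flipBit, Function.update_self]
      have : ∀ z : ZMod 2, z ≠ z + 1 := by decide
      simpa using this (v j)
    · simp [flipBit, Function.update_of_ne hj, hj]
  rw [hammingDist, h, Finset.card_singleton]

theorem eq_or_flip_of_dist_le_one {v h : Fin n → ZMod 2} (hd : hammingDist v h ≤ 1) :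
    h = v ∨ ∃ i, h = flipBit v i := by
  rcases Nat.lt_or_ge (hammingDist v h) 1 with h1 | h1
  · left
    have : hammingDist v h = 0 := by omega
    exact (hammingDist_eq_zero.mp this).symm
  · right
    have h2 : hammingDist v h = 1 := le_antisymm hd h1
    rw [hammingDist] at h2
    obtain ⟨i, hi⟩ := Finset.card_eq_one.mp h2
    refine ⟨i, funext fun j => ?_⟩
    rcases eq_or_ne j i with rfl | hj
    · have : j ∈ (Finset.univ.filter fun x => v x ≠ h x) := by rw [hi]; simp
      simp only [Finset.mem_filter, Finset.mem_univ, true_and] at this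
      have hz : ∀ a b : ZMod 2, a ≠ b → b = a + 1 := by decide
      simp only [flipBit, Function.update_self]
      exact hz _ _ this
    · have : j ∉ (Finset.univ.filter fun x => v x ≠ h x) := by rw [hi]; simpa using hj
      simp only [Finset.mem_filter, Finset.mem_univ, true_and, not_not] at this
      simp [flipBit, Function.update_of_ne hj, this.symm]

variable (E : Fin n ≃ {x : Fin k → ZMod 2 // x ≠ 0})

def synd (v : Fin n → ZMod 2) : Fin k → ZMod 2 :=
  ∑ i, v i • (E i : Fin k → ZMod 2)

theorem synd_flipBit (v : Fin n → ZMod 2) (i : Fin n) :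
    synd E (flipBit v i) = synd E v + E i := by
  have h1 : ∀ j, (flipBit v i) j • (E j : Fin k → ZMod 2)
      = v j • (E j : Fin k → ZMod 2) + (if j = i then (E i : Fin k → ZMod 2) else 0) := by
    intro j
    rcases eq_or_ne j i with rfl | hj
    · simp [flipBit, Function.update_self, add_smul]
    · simp [flipBit, Function.update_of_ne hj, hj]
  calc synd E (flipBit v i)
      = ∑ j, (v j • (E j : Fin k → ZMod 2) + if j = i then (E i : Fin k → ZMod 2) else 0) :=
        Finset.sum_congr rfl fun j _ => h1 j
    _ = synd E v + E i := by
        rw [Finset.sum_add_distrib, Finset.sum_ite_eq' Finset.univ i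
          (fun _ => (E i : Fin k → ZMod 2)), if_pos (Finset.mem_univ i)]
        rfl

def idx (b : Fin k → ZMod 2) : ℕ :=
  if h : b = 0 then 0 else (E.symm ⟨b, h⟩).val + 1

theorem idx_range {b : Fin k → ZMod 2} (hb : b ≠ 0) : 1 ≤ idx E b ∧ idx E b ≤ n := by
  rw [idx, dif_neg hb]
  have := (E.symm ⟨b, hb⟩).isLt
  omega

theorem idx_inj {b b' : Fin k → ZMod 2} (h : idx E b = idx E b') : b = b' := by
  by_cases h1 : b = 0 <;> by_cases h2 : b' = 0
  · rw [h1, h2]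
  · rw [idx, dif_pos h1, idx, dif_neg h2] at h; omega
  · rw [idx, dif_neg h1, idx, dif_pos h2] at h; omega
  · rw [idx, dif_neg h1, idx, dif_neg h2] at h
    have : E.symm ⟨b, h1⟩ = E.symm ⟨b', h2⟩ := Fin.ext (by omega)
    exact Subtype.mk_eq_mk.mp (E.symm.injective this)

theorem idx_apply (j : Fin n) : idx E (E j : Fin k → ZMod 2) = j.val + 1 := by
  rw [idx, dif_neg (E j).2]
  congr 1
  have : (⟨(E j : Fin k → ZMod 2), (E j).2⟩ : {x : Fin k → ZMod 2 // x ≠ 0}) = E j :=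
    Subtype.coe_eta _ _
  rw [this, Equiv.symm_apply_apply]

def D (n x y : ℕ) : ℕ := if x ≤ y then y - x else y + n - x

/-- head function of the orientation -/
def hd (v : Fin n → ZMod 2) (i : Fin n) : Fin n → ZMod 2 :=
  if synd E v = 0 then v
  else if synd E (flipBit v i) = 0 then flipBit v i
  else if D n (idx E (synd E v)) (idx E (synd E (flipBit v i))) ∈ Finset.Icc 1 ((n - 1) / 2)
    then v else flipBit v i

theorem hd_mem (v : Fin n → ZMod 2) (i : Fin n) : hd E v i = v ∨ hd E v i = flipBit v i := by
  rw [hd]; split_ifs <;> simp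

theorem D_antisymm {x y : ℕ} (hodd : n % 2 = 1) (hx1 : 1 ≤ x) (hx2 : x ≤ n)
    (hy1 : 1 ≤ y) (hy2 : y ≤ n) (hxy : x ≠ y) :
    (D n x y ∈ Finset.Icc 1 ((n - 1) / 2)) ↔ ¬ (D n y x ∈ Finset.Icc 1 ((n - 1) / 2)) := by
  simp only [D, Finset.mem_Icc]
  split_ifs <;> omega

theorem hd_compatible (hodd : n % 2 = 1) (v : Fin n → ZMod 2) (i : Fin n) :
    hd E (flipBit v i) i = hd E v i := by
  have hflip : flipBit (flipBit v i) i = v := flipBit_flipBit v i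
  have hsf : synd E (flipBit v i) = synd E v + E i := synd_flipBit E v i
  by_cases h1 : synd E v = 0
  · have h2 : synd E (flipBit v i) ≠ 0 := by
      rw [hsf, h1, zero_add]; exact (E i).2
    have L : hd E (flipBit v i) i = v := by rw [hd, if_neg h2, hflip, if_pos h1]
    have R : hd E v i = v := by rw [hd, if_pos h1]
    rw [L, R]
  · by_cases h2 : synd E (flipBit v i) = 0
    · have L : hd E (flipBit v i) i = flipBit v i := by rw [hd, if_pos h2]
      have R : hd E v i = flipBit v i := by rw [hd, if_neg h1, if_pos h2]
      rw [L, R]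
    · have hne : synd E (flipBit v i) ≠ synd E v := by
        intro h
        rw [hsf] at h
        have h4 := congrArg (HAdd.hAdd (synd E v)) h
        rw [add_add_cancel, zmod2_add_self] at h4
        exact (E i).2 h4
      have hxr := idx_range E h1
      have hyr := idx_range E h2
      have hxy : idx E (synd E v) ≠ idx E (synd E (flipBit v i)) := by
        intro h; exact hne (idx_inj E h).symm
      have hanti := D_antisymm (x := idx E (synd E v)) (y := idx E (synd E (flipBit v i)))
        hodd hxr.1 hxr.2 hyr.1 hyr.2 hxy
      have L : hd E (flipBit v i) i =
          (if D n (idx E (synd E (flipBit v i))) (idx E (synd E v)) ∈ Finset.Icc 1 ((n - 1) / 2)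
            then flipBit v i else v) := by
        rw [hd, if_neg h2, hflip, if_neg h1]
      have R : hd E v i =
          (if D n (idx E (synd E v)) (idx E (synd E (flipBit v i))) ∈ Finset.Icc 1 ((n - 1) / 2)
            then v else flipBit v i) := by
        rw [hd, if_neg h1, if_neg h2]
      rw [L, R]
      by_cases h3 : D n (idx E (synd E v)) (idx E (synd E (flipBit v i)))
          ∈ Finset.Icc 1 ((n - 1) / 2)
      · rw [if_pos h3, if_neg (hanti.mp h3)]
      · rw [if_neg h3, if_pos (not_not.mp (fun hc => h3 (hanti.mpr hc)))]

theorem hd_eq_self_iff (v : Fin n → ZMod 2) (h1 : synd E v ≠ 0) (i : Fin n) :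
    hd E v i = v ↔ (synd E (flipBit v i) ≠ 0 ∧
      D n (idx E (synd E v)) (idx E (synd E (flipBit v i))) ∈ Finset.Icc 1 ((n - 1) / 2)) := by
  have hne := flipBit_ne v i
  rw [hd, if_neg h1]
  by_cases h2 : synd E (flipBit v i) = 0
  · simp [h2, hne]
  · by_cases h3 : D n (idx E (synd E v)) (idx E (synd E (flipBit v i)))
        ∈ Finset.Icc 1 ((n - 1) / 2)
    · simp [h2, h3]
    · simp [h2, h3, hne]

theorem indeg_code (v : Fin n → ZMod 2) (hv : synd E v = 0) :
    (Finset.univ.filter fun i : Fin n => hd E v i = v).card = n := by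
  have h : ∀ i : Fin n, hd E v i = v := fun i => by rw [hd, if_pos hv]
  rw [Finset.filter_true_of_mem fun i _ => h i, Finset.card_univ, Fintype.card_fin]

theorem D_inj {x y y' : ℕ} (hx1 : 1 ≤ x) (hx2 : x ≤ n) (hy1 : 1 ≤ y) (hy2 : y ≤ n)
    (hy1' : 1 ≤ y') (hy2' : y' ≤ n) (h : D n x y = D n x y') : y = y' := by
  simp only [D] at h
  split_ifs at h <;> omega

theorem indeg_noncode (hodd : n % 2 = 1) (v : Fin n → ZMod 2) (hv : synd E v ≠ 0) :
    (Finset.univ.filter fun i : Fin n => hd E v i = v).card = (n - 1) / 2 := by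
  classical
  set a := synd E v with ha
  set x := idx E a with hxdef
  have hxr : 1 ≤ x ∧ x ≤ n := idx_range E hv
  have hfil : (Finset.univ.filter fun i : Fin n => hd E v i = v)
      = (Finset.univ.filter fun i : Fin n =>
          a + (E i : Fin k → ZMod 2) ≠ 0 ∧
          D n x (idx E (a + (E i : Fin k → ZMod 2))) ∈ Finset.Icc 1 ((n - 1) / 2)) := by
    ext i
    simp only [Finset.mem_filter, Finset.mem_univ, true_and]
    rw [hd_eq_self_iff E v hv i, synd_flipBit, ← ha]
  rw [hfil]
  have hbij : (Finset.univ.filter fun i : Fin n =>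
          a + (E i : Fin k → ZMod 2) ≠ 0 ∧
          D n x (idx E (a + (E i : Fin k → ZMod 2))) ∈ Finset.Icc 1 ((n - 1) / 2)).card
      = (Finset.Icc 1 ((n - 1) / 2)).card := by
    apply Finset.card_bij (fun i _ => D n x (idx E (a + (E i : Fin k → ZMod 2))))
    · intro i hi
      exact (Finset.mem_filter.mp hi).2.2
    · intro i hi i' hi' heq
      obtain ⟨-, hb, -⟩ := Finset.mem_filter.mp hi
      obtain ⟨-, hb', -⟩ := Finset.mem_filter.mp hi'
      have hr := idx_range E hb
      have hr' := idx_range E hb'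
      have := D_inj (n := n) hxr.1 hxr.2 hr.1 hr.2 hr'.1 hr'.2 heq
      have hbb := idx_inj E this
      have : (E i : Fin k → ZMod 2) = (E i' : Fin k → ZMod 2) := by
        have := congrArg (HAdd.hAdd a) hbb
        rwa [add_add_cancel, add_add_cancel] at this
      exact E.injective (Subtype.ext this)
    · intro c hc
      rw [Finset.mem_Icc] at hc
      have hmn : (n - 1) / 2 + 1 ≤ n := by omega
      set y : ℕ := if x + c ≤ n then x + c else x + c - n with hy
      have hyr : 1 ≤ y ∧ y ≤ n := by rw [hy]; split_ifs <;> omega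
      have hyx : y ≠ x := by rw [hy]; split_ifs <;> omega
      have hDxy : D n x y = c := by rw [hy, D]; split_ifs <;> omega
      set j : Fin n := ⟨y - 1, by omega⟩ with hj
      set b : Fin k → ZMod 2 := (E j : Fin k → ZMod 2) with hb
      have hidxb : idx E b = y := by rw [hb, idx_apply]; simp [hj]; omega
      have hbne : b ≠ 0 := (E j).2
      have hba : b ≠ a := by
        intro h
        exact hyx (by rw [← hidxb, h, hxdef])
      have hab : a + b ≠ 0 := fun h => hba (eq_of_add_eq_zero' h)
      refine ⟨E.symm ⟨a + b, hab⟩, ?_, ?_⟩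
      · simp only [Finset.mem_filter, Finset.mem_univ, true_and]
        rw [Equiv.apply_symm_apply]
        constructor
        · rw [add_add_cancel]; exact hbne
        · rw [add_add_cancel, hidxb, hDxy, Finset.mem_Icc]; omega
      · rw [Equiv.apply_symm_apply]
        show D n x (idx E (a + (a + b))) = c
        rw [add_add_cancel, hidxb, hDxy]
  rw [hbij, Nat.card_Icc]
  omega

theorem perfect (v : Fin n → ZMod 2) :
    ∃! h : Fin n → ZMod 2, synd E h = 0 ∧ hammingDist v h ≤ 1 := by
  by_cases hv : synd E v = 0
  · refine ⟨v, ⟨hv, by simp⟩, ?_⟩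
    rintro h ⟨h0, hd1⟩
    rcases eq_or_flip_of_dist_le_one hd1 with h' | ⟨i, h'⟩
    · exact h'
    · exfalso
      rw [h', synd_flipBit, hv, zero_add] at h0
      exact (E i).2 h0
  · set i0 := E.symm ⟨synd E v, hv⟩ with hi0
    have hEi0 : (E i0 : Fin k → ZMod 2) = synd E v := by rw [hi0, Equiv.apply_symm_apply]
    refine ⟨flipBit v i0, ⟨?_, ?_⟩, ?_⟩
    · rw [synd_flipBit, hEi0, zmod2_add_self]
    · rw [hammingDist_flipBit]
    · rintro h ⟨h0, hd1⟩
      rcases eq_or_flip_of_dist_le_one hd1 with h' | ⟨i, h'⟩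
      · exact absurd (h' ▸ h0) hv
      · rw [h', synd_flipBit] at h0
        have : (E i : Fin k → ZMod 2) = synd E v := eq_of_add_eq_zero' h0
        have : E i = E i0 := Subtype.ext (by rw [this, hEi0])
        rw [h', E.injective this]

end HammingSink

theorem hamming_sink_orientation (k : ℕ) (hk : 0 < k) (n : ℕ) (hn : n = 2 ^ k - 1) :
    ∃ (o : CubeOrientation n) (H : Set (Fin n → ZMod 2)),
      IsPerfectCode H ∧
      (∀ v, o.inDeg v = (n - 1) / 2 ∨ o.inDeg v = n) ∧
      (∀ v, o.inDeg v = n ↔ v ∈ H) := by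
  classical
  have h2k : 2 ≤ 2 ^ k := by
    calc 2 = 2 ^ 1 := by norm_num
    _ ≤ 2 ^ k := Nat.pow_le_pow_right (by norm_num) hk
  obtain ⟨t, ht⟩ : 2 ∣ 2 ^ k := dvd_pow_self 2 hk.ne'
  have hodd : n % 2 = 1 := by omega
  have hn1 : 1 ≤ n := by omega
  have hcard : Fintype.card {x : Fin k → ZMod 2 // x ≠ 0} = n := by
    have h1 : Fintype.card {x : Fin k → ZMod 2 // ¬(x = 0)}
        = Fintype.card (Fin k → ZMod 2) - Fintype.card {x : Fin k → ZMod 2 // x = 0} :=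
      Fintype.card_subtype_compl _
    have h2 : Fintype.card {x : Fin k → ZMod 2 // x = 0} = 1 :=
      Fintype.card_subtype_eq (0 : Fin k → ZMod 2)
    have h3 : Fintype.card (Fin k → ZMod 2) = 2 ^ k := by
      rw [Fintype.card_fun, ZMod.card, Fintype.card_fin]
    have : Fintype.card {x : Fin k → ZMod 2 // ¬(x = 0)} = 2 ^ k - 1 := by
      rw [h1, h2, h3]
    rw [hn]
    exact this
  set E : Fin n ≃ {x : Fin k → ZMod 2 // x ≠ 0} := (Fintype.equivFinOfCardEq hcard).symm
    with hE
  refine ⟨⟨HammingSink.hd E, HammingSink.hd_mem E, HammingSink.hd_compatible E hodd⟩,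
    {v | HammingSink.synd E v = 0}, HammingSink.perfect E, ?_, ?_⟩
  · intro v
    by_cases hv : HammingSink.synd E v = 0
    · right
      show (Finset.univ.filter fun i : Fin n => HammingSink.hd E v i = v).card = n
      exact HammingSink.indeg_code E v hv
    · left
      show (Finset.univ.filter fun i : Fin n => HammingSink.hd E v i = v).card = (n - 1) / 2
      exact HammingSink.indeg_noncode E hodd v hv
  · intro v
    by_cases hv : HammingSink.synd E v = 0
    · constructor
      · intro _; exact hv
      · intro _
        show (Finset.univ.filter fun i : Fin n => HammingSink.hd E v i = v).card = n
        exact HammingSink.indeg_code E v hv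
    · constructor
      · intro h
        exfalso
        have : (Finset.univ.filter fun i : Fin n => HammingSink.hd E v i = v).card = (n - 1) / 2 :=
          HammingSink.indeg_noncode E hodd v hv
        have h' : (Finset.univ.filter fun i : Fin n => HammingSink.hd E v i = v).card = n := h
        omega
      · intro h; exact absurd h hv
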